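/- Let B, K, c, M be positive real numbers, let N and N' be real numbers with 0 ≤ N' ≤ N, and let ℓ be a natural number with ℓ ≤ 64·B²·K²·c/M² − N'. Then 4B·√(2c) · Σ_{s=1}^{ℓ} 1/√(N + s) ≤ 64·√2·B²·K·c/M − 8B·√(2·c·N'). -/

import Mathlib

open Finset

lemma sum_inv_sqrt_le (N : ℝ) (hN : 0 ≤ N) (ℓ : ℕ) :
    ∑ s ∈ Finset.Icc 1 ℓ, 1 / Real.sqrt (N + (s : ℝ)) ≤
      2 * (Real.sqrt (N + ℓ) - Real.sqrt N) := by
  induction ℓ with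
  | zero => simp
  | succ n ih =>
    rw [Finset.sum_Icc_succ_top (Nat.one_le_iff_ne_zero.mpr (Nat.succ_ne_zero n))]
    have hb : (0:ℝ) ≤ N + n := by positivity
    have ha : (0:ℝ) < N + (n+1) := by positivity
    set sa := Real.sqrt (N + (n+1)) with hsa_def
    set sb := Real.sqrt (N + n) with hsb_def
    have hsa2 : sa ^ 2 = N + (n+1) := Real.sq_sqrt (le_of_lt ha)
    have hsb2 : sb ^ 2 = N + n := Real.sq_sqrt hb
    have hsa0 : 0 < sa := Real.sqrt_pos.mpr ha
    have hsb0 : 0 ≤ sb := Real.sqrt_nonneg _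
    have hba : sb ≤ sa := Real.sqrt_le_sqrt (by linarith)
    have key : 1 / Real.sqrt (N + ((n:ℝ)+1)) ≤ 2 * (sa - sb) := by
      have : Real.sqrt (N + ((n:ℝ)+1)) = sa := by norm_num [hsa_def]
      rw [this, div_le_iff₀ hsa0]
      nlinarith [sq_nonneg (sa - sb)]
    have hcast : ((n:ℝ)+1) = ((n+1 : ℕ) : ℝ) := by push_cast; ring
    calc ∑ s ∈ Finset.Icc 1 n, 1 / Real.sqrt (N + (s : ℝ))
          + 1 / Real.sqrt (N + ((n+1 : ℕ) : ℝ))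
        ≤ 2 * (sb - Real.sqrt N) + 2 * (sa - sb) := by
          apply add_le_add ih
          rw [← hcast]; exact key
      _ = 2 * (sa - Real.sqrt N) := by ring
      _ = 2 * (Real.sqrt (N + ((n+1:ℕ):ℝ)) - Real.sqrt N) := by
          rw [← hcast]

/-- For positive reals `B, K, c, M`, reals `0 ≤ N' ≤ N`, and a natural number
`ℓ ≤ 64 B² K² c / M² - N'`, one has
`4B √(2c) ∑_{s=1}^{ℓ} 1/√(N+s) ≤ 64 √2 B² K c / M - 8 B √(2 c N')`. -/
theorem offline_saving_gap_dependent
    (B K c M : ℝ) (hB : 0 < B) (hK : 0 < K) (hc : 0 < c) (hM : 0 < M)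
    (N N' : ℝ) (h0 : 0 ≤ N') (h1 : N' ≤ N) (ℓ : ℕ)
    (hℓ : (ℓ : ℝ) ≤ 64 * B ^ 2 * K ^ 2 * c / M ^ 2 - N') :
    4 * B * Real.sqrt (2 * c) * ∑ s ∈ Finset.Icc 1 ℓ, 1 / Real.sqrt (N + (s : ℝ)) ≤
      64 * Real.sqrt 2 * B ^ 2 * K * c / M - 8 * B * Real.sqrt (2 * c * N') := by
  have hN : 0 ≤ N := le_trans h0 h1
  set A := 8 * B * K * Real.sqrt c / M with hA_def
  have hsc : Real.sqrt c ^ 2 = c := Real.sq_sqrt hc.le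
  have hA0 : 0 < A := by positivity
  have hA2 : A ^ 2 = 64 * B ^ 2 * K ^ 2 * c / M ^ 2 := by
    rw [hA_def, div_pow]; rw [mul_pow, mul_pow, hsc]; ring
  set sn := Real.sqrt N with hsn_def
  set sn' := Real.sqrt N' with hsn'_def
  have hsn2 : sn ^ 2 = N := Real.sq_sqrt hN
  have hsn'2 : sn' ^ 2 = N' := Real.sq_sqrt h0
  have hsn'0 : 0 ≤ sn' := Real.sqrt_nonneg _
  have hsn'sn : sn' ≤ sn := Real.sqrt_le_sqrt h1
  have hsn'A : sn' ≤ A := by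
    have : N' ≤ A ^ 2 := by rw [hA2]; nlinarith [Nat.cast_nonneg (α := ℝ) ℓ]
    calc sn' ≤ Real.sqrt (A ^ 2) := Real.sqrt_le_sqrt this
      _ = A := Real.sqrt_sq hA0.le
  -- key sqrt bound
  have hkey : Real.sqrt (N + ℓ) ≤ A + sn - sn' := by
    have hpos : 0 ≤ A + sn - sn' := by linarith [Real.sqrt_nonneg N]
    have hub : N + (ℓ:ℝ) ≤ (A + sn - sn') ^ 2 := by
      have : (ℓ:ℝ) ≤ A ^ 2 - N' := by rw [hA2]; exact hℓ
      nlinarith [mul_nonneg (sub_nonneg.mpr hsn'sn) (sub_nonneg.mpr hsn'A)]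
    calc Real.sqrt (N + ℓ) ≤ Real.sqrt ((A + sn - sn') ^ 2) := Real.sqrt_le_sqrt hub
      _ = A + sn - sn' := Real.sqrt_sq hpos
  have hsum := sum_inv_sqrt_le N hN ℓ
  have h2c : 0 < Real.sqrt (2 * c) := Real.sqrt_pos.mpr (by positivity)
  have hfac : 0 ≤ 4 * B * Real.sqrt (2 * c) := by positivity
  have step1 : 4 * B * Real.sqrt (2 * c) * ∑ s ∈ Finset.Icc 1 ℓ, 1 / Real.sqrt (N + (s : ℝ))
      ≤ 4 * B * Real.sqrt (2 * c) * (2 * ((A + sn - sn') - sn)) := by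
    apply mul_le_mul_of_nonneg_left _ hfac
    calc ∑ s ∈ Finset.Icc 1 ℓ, 1 / Real.sqrt (N + (s : ℝ))
        ≤ 2 * (Real.sqrt (N + ℓ) - sn) := hsum
      _ ≤ 2 * ((A + sn - sn') - sn) := by linarith
  refine step1.trans ?_
  -- rewrite the RHS
  have hsqrt2c : Real.sqrt (2 * c) = Real.sqrt 2 * Real.sqrt c :=
    Real.sqrt_mul (by norm_num) c
  have hsqrtN' : Real.sqrt (2 * c * N') = Real.sqrt (2 * c) * sn' :=
    Real.sqrt_mul (by positivity) N'
  have h2 : Real.sqrt 2 ^ 2 = 2 := Real.sq_sqrt (by norm_num)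
  have hAc : Real.sqrt (2 * c) * A = Real.sqrt 2 * (8 * B * K * c) / M := by
    rw [hsqrt2c, hA_def]
    have h := Real.mul_self_sqrt hc.le
    field_simp
    linear_combination h
  rw [hsqrtN']
  have : 4 * B * Real.sqrt (2 * c) * (2 * ((A + sn - sn') - sn))
      = 8 * B * (Real.sqrt (2 * c) * A) - 8 * B * (Real.sqrt (2 * c) * sn') := by ring
  rw [this, hAc]
  have : 64 * Real.sqrt 2 * B ^ 2 * K * c / M
      = 8 * B * (Real.sqrt 2 * (8 * B * K * c) / M) := by ring
  rw [this]
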